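/- Let d ≥ 1, K > 0, and z ∈ ℂ^d with Im(z_j) < 0 for all j and Σ_j Im(z_j) < −1. Then the generalized Fourier transform of the call-on-min payoff P(x) = max(min(e^{x_1},…,e^{x_d}) − K, 0) is P̂(z) = K^{1 − i Σ_j z_j} / ((i(Σ_j z_j) − 1) · ∏_j (i z_j)). -/

import Mathlib

open MeasureTheory Set Filter Topology

lemma rexp_integral_Ioi (b : ℝ) (hb : 0 < b) (a : ℝ) :
    ∫ x in Ioi a, Real.exp (-(b * x)) = Real.exp (-(b * a)) / b := by
  have hderiv : ∀ x ∈ Ici a, HasDerivAt (fun x : ℝ => -(Real.exp (-(b * x)) / b))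
      (Real.exp (-(b * x))) x := by
    intro x _
    have h1 : HasDerivAt (fun x : ℝ => -(b * x)) (-b) x := by
      exact ((hasDerivAt_id x).const_mul b).neg.congr_deriv (by simp)
    have h2 := (h1.exp.div_const b).neg
    refine h2.congr_deriv ?_
    field_simp
  have hint : IntegrableOn (fun x : ℝ => Real.exp (-(b * x))) (Ioi a) := by
    simpa [neg_mul] using exp_neg_integrableOn_Ioi a hb
  have htend : Tendsto (fun x : ℝ => -(Real.exp (-(b * x)) / b)) atTop (𝓝 0) := by
    have : Tendsto (fun x : ℝ => Real.exp (-(b * x))) atTop (𝓝 0) := by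
      have h0 : Tendsto (fun x : ℝ => -(b * x)) atTop atBot :=
        tendsto_neg_atTop_atBot.comp (Tendsto.const_mul_atTop hb tendsto_id)
      simpa [Function.comp_def] using Real.tendsto_exp_atBot.comp h0
    simpa using (this.div_const b).neg
  have := integral_Ioi_of_hasDerivAt_of_tendsto' hderiv hint htend
  rw [this]; ring

lemma cexp_integrableOn_Ioi (c : ℂ) (hc : 0 < c.re) (a : ℝ) :
    IntegrableOn (fun x : ℝ => Complex.exp (-(c * x))) (Ioi a) := by
  apply Integrable.mono' (g := fun x : ℝ => Real.exp (-(c.re * x)))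
  · simpa [neg_mul] using (exp_neg_integrableOn_Ioi a hc).integrable
  · exact (Complex.continuous_exp.comp (by continuity)).aestronglyMeasurable
  · filter_upwards with x
    simp [Complex.norm_exp, Complex.mul_re]

lemma cexp_norm_tendsto (c : ℂ) (hc : 0 < c.re) :
    Tendsto (fun x : ℝ => Complex.exp (-(c * x))) atTop (𝓝 0) := by
  rw [tendsto_zero_iff_norm_tendsto_zero]
  have h : Tendsto (fun x : ℝ => Real.exp (-(c.re * x))) atTop (𝓝 0) := by
    have h0 : Tendsto (fun x : ℝ => -(c.re * x)) atTop atBot :=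
        tendsto_neg_atTop_atBot.comp (Tendsto.const_mul_atTop hc tendsto_id)
    simpa [Function.comp_def] using Real.tendsto_exp_atBot.comp h0
  refine h.congr fun x => ?_
  simp [Complex.norm_exp, Complex.mul_re]

lemma cexp_integral_Ioi (c : ℂ) (hc : 0 < c.re) (a : ℝ) :
    ∫ x in Ioi a, Complex.exp (-(c * x)) = Complex.exp (-(c * a)) / c := by
  have hc0 : c ≠ 0 := fun h => by simp [h] at hc
  have hderiv : ∀ x ∈ Ici a, HasDerivAt (fun x : ℝ => -(Complex.exp (-(c * x)) / c))
      (Complex.exp (-(c * x))) x := by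
    intro x _
    have h1 : HasDerivAt (fun x : ℝ => -(c * (x : ℂ))) (-c) x := by
      exact ((Complex.ofRealCLM.hasDerivAt (x := x)).const_mul c).neg.congr_deriv (by simp)
    have h2 := (Complex.hasDerivAt_exp (-(c * (x : ℂ)))).comp x h1
    have h3 := (h2.div_const c).neg
    refine h3.congr_deriv ?_
    field_simp
  have htend : Tendsto (fun x : ℝ => -(Complex.exp (-(c * x)) / c)) atTop (𝓝 0) := by
    simpa using ((cexp_norm_tendsto c hc).div_const c).neg
  have := integral_Ioi_of_hasDerivAt_of_tendsto' hderiv (cexp_integrableOn_Ioi c hc a) htend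
  rw [this]; ring

lemma fin_lt_iInf {d : ℕ} [Nonempty (Fin d)] (x : Fin d → ℝ) (t : ℝ) :
    t < (⨅ j, x j) ↔ ∀ j, t < x j := by
  constructor
  · intro h j
    exact h.trans_le (ciInf_le (Set.finite_range x).bddBelow j)
  · intro h
    have hmem : sInf (Set.range x) ∈ Set.range x :=
      (Set.range_nonempty x).csInf_mem (Set.finite_range x)
    obtain ⟨j, hj⟩ := hmem
    show t < sInf (Set.range x)
    rw [← hj]
    exact h j

lemma exp_iInf {d : ℕ} [Nonempty (Fin d)] (x : Fin d → ℝ) :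
    Real.exp (⨅ j, x j) = ⨅ j, Real.exp (x j) :=
  Monotone.map_ciInf_of_continuousAt (Real.continuous_exp.continuousAt)
    Real.exp_monotone (Set.finite_range x).bddBelow

open Complex in
/-- Generalized Fourier transform of the call-on-min payoff. -/
theorem call_on_min_transform (d : ℕ) (hd : 0 < d) (K : ℝ) (hK : 0 < K)
    (z : Fin d → ℂ) (hz : ∀ j, (z j).im < 0) (hzsum : (∑ j, z j).im < -1) :
    (∫ x : Fin d → ℝ,
        Complex.exp (-(Complex.I * ∑ j, z j * (x j : ℂ))) *
          (max ((⨅ j, Real.exp (x j)) - K) 0 : ℝ)) =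
      (K : ℂ) ^ ((1 : ℂ) - Complex.I * ∑ j, z j) /
        ((Complex.I * (∑ j, z j) - 1) * ∏ j, (Complex.I * z j)) := by
  haveI : Nonempty (Fin d) := Fin.pos_iff_nonempty.mp hd
  have hSim : (∑ j, z j).im = ∑ j, (z j).im := Complex.im_sum _ _
  have hizre : ∀ j, 0 < (Complex.I * z j).re := by
    intro j
    simp only [Complex.mul_re, Complex.I_re, Complex.I_im, zero_mul, one_mul, zero_sub]
    linarith [hz j]
  set F : (Fin d → ℝ) → ℝ → ℂ := fun x t =>
    (if Real.log K < t then Complex.exp (t : ℂ) else 0) *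
      ∏ j, Set.indicator (Set.Ioi t)
        (fun u : ℝ => Complex.exp (-(Complex.I * z j * (u : ℂ)))) (x j) with hF
  have hB : ∀ x : Fin d → ℝ,
      (∫ t, F x t) = Complex.exp (-(Complex.I * ∑ j, z j * (x j : ℂ))) *
        ((max ((⨅ j, Real.exp (x j)) - K) 0 : ℝ) : ℂ) := by
    intro x
    set m := ⨅ j, x j with hm
    have hFx : ∀ t : ℝ, F x t = (∏ j, Complex.exp (-(Complex.I * z j * (x j : ℂ)))) *
        Set.indicator (Set.Ioo (Real.log K) m) (fun t : ℝ => Complex.exp (t : ℂ)) t := by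
      intro t
      by_cases h1 : Real.log K < t
      · by_cases h2 : t < m
        · have h3 : ∀ j, x j ∈ Set.Ioi t := fun j => (fin_lt_iInf x t).1 h2 j
          rw [hF]
          simp only [h1, if_true]
          rw [Set.indicator_of_mem (by exact ⟨h1, h2⟩ : t ∈ Set.Ioo (Real.log K) m)]
          rw [Finset.prod_congr rfl fun j _ => Set.indicator_of_mem (h3 j) _]
          ring
        · obtain ⟨j, hj⟩ : ∃ j, ¬ t < x j := by
            by_contra hcon
            push_neg at hcon
            exact h2 ((fin_lt_iInf x t).2 hcon)
          rw [hF]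
          simp only
          rw [Set.indicator_of_notMem (fun hmem => h2 hmem.2)]
          rw [Finset.prod_eq_zero (Finset.mem_univ j) (Set.indicator_of_notMem hj _)]
          simp
      · rw [hF]
        simp only [h1, if_false, zero_mul]
        rw [Set.indicator_of_notMem (fun hmem => h1 hmem.1)]
        simp
    simp_rw [hFx]
    rw [integral_const_mul, integral_indicator measurableSet_Ioo]
    have hprod : (∏ j, Complex.exp (-(Complex.I * z j * (x j : ℂ))))
        = Complex.exp (-(Complex.I * ∑ j, z j * (x j : ℂ))) := by
      rw [← Complex.exp_sum]
      congr 1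
      rw [Finset.mul_sum, ← Finset.sum_neg_distrib]
      exact Finset.sum_congr rfl fun j _ => by ring
    rw [hprod]
    congr 1
    rw [← exp_iInf x, ← hm]
    by_cases hlt : Real.log K < m
    · rw [← integral_Ioc_eq_integral_Ioo, ← intervalIntegral.integral_of_le hlt.le]
      have h1 : (∫ t in (Real.log K)..m, Complex.exp ((1:ℂ) * (t:ℂ)))
          = (Complex.exp ((1:ℂ)*(m:ℂ)) - Complex.exp ((1:ℂ)*((Real.log K : ℝ):ℂ)))/1 :=
        integral_exp_mul_complex one_ne_zero
      simp only [one_mul, div_one] at h1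
      rw [h1]
      have hK' : K ≤ Real.exp m := by
        calc K = Real.exp (Real.log K) := (Real.exp_log hK).symm
          _ ≤ Real.exp m := Real.exp_le_exp.2 hlt.le
      rw [max_eq_left (by linarith)]
      rw [← Complex.ofReal_exp, ← Complex.ofReal_exp, Real.exp_log hK]
      push_cast
      ring
    · rw [Set.Ioo_eq_empty hlt]
      have h2 : Real.exp m ≤ K := by
        calc Real.exp m ≤ Real.exp (Real.log K) := Real.exp_le_exp.2 (not_lt.1 hlt)
          _ = K := Real.exp_log hK
      rw [max_eq_right (by linarith)]
      simp
  have hFint : Integrable (Function.uncurry F) ((volume : Measure (Fin d → ℝ)).prod volume) := by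
    have hmeas : AEStronglyMeasurable (Function.uncurry F)
        ((volume : Measure (Fin d → ℝ)).prod volume) := by
      apply Measurable.aestronglyMeasurable
      have : Function.uncurry F = fun p : (Fin d → ℝ) × ℝ =>
          (if Real.log K < p.2 then Complex.exp (p.2 : ℂ) else 0) *
            ∏ j, Set.indicator {q : (Fin d → ℝ) × ℝ | q.2 < q.1 j}
              (fun q => Complex.exp (-(Complex.I * z j * (q.1 j : ℂ)))) p := by
        funext p
        rw [hF]
        show _ * _ = _
        exact congrArg (fun w => (if Real.log K < p.2 then Complex.exp (p.2 : ℂ) else 0) * w)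
          (Finset.prod_congr rfl fun j _ => by
            by_cases h : p.2 < p.1 j <;> simp [Set.indicator, h])
      rw [this]
      apply Measurable.mul
      · exact Measurable.ite (measurableSet_lt measurable_const measurable_snd)
          (Complex.measurable_exp.comp (Complex.measurable_ofReal.comp measurable_snd))
          measurable_const
      · apply Finset.measurable_prod
        intro j _
        exact Measurable.indicator
          (Complex.measurable_exp.comp
            ((Complex.measurable_ofReal.comp ((measurable_pi_apply j).comp measurable_fst)).const_mul
              (Complex.I * z j)).neg)
          (measurableSet_lt measurable_snd ((measurable_pi_apply j).comp measurable_fst))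
    rw [integrable_prod_iff' hmeas]
    constructor
    · refine .of_forall fun t => ?_
      have h0 : (fun x : Fin d → ℝ => Function.uncurry F (x, t)) =
          fun x => (if Real.log K < t then Complex.exp (t : ℂ) else 0) *
            ∏ j, (fun u : ℝ => Set.indicator (Set.Ioi t)
              (fun u : ℝ => Complex.exp (-(Complex.I * z j * (u : ℂ)))) u) (x j) := by
        funext x; rw [hF]; rfl
      rw [h0]
      exact (Integrable.fintype_prod (f := fun j (u : ℝ) => Set.indicator (Set.Ioi t)
        (fun u : ℝ => Complex.exp (-(Complex.I * z j * (u : ℂ)))) u)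
        (fun j => (integrable_indicator_iff measurableSet_Ioi).2
          (cexp_integrableOn_Ioi (Complex.I * z j) (hizre j) t))).const_mul _
    · have heq : ∀ t : ℝ, (∫ x : Fin d → ℝ, ‖Function.uncurry F (x, t)‖) =
          (if Real.log K < t then Real.exp t else 0) *
            ∏ j, (Real.exp ((z j).im * t) / (-(z j).im)) := by
        intro t
        have hnrm : ∀ x : Fin d → ℝ, ‖Function.uncurry F (x, t)‖ =
            (if Real.log K < t then Real.exp t else 0) *
              ∏ j, (fun u : ℝ => Set.indicator (Set.Ioi t)
                (fun u : ℝ => Real.exp ((z j).im * u)) u) (x j) := by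
          intro x
          rw [hF]
          show ‖_ * _‖ = _
          rw [norm_mul, norm_prod]
          congr 1
          · split_ifs <;> simp [Complex.norm_exp]
          · refine Finset.prod_congr rfl fun j _ => ?_
            rw [norm_indicator_eq_indicator_norm]
            congr 1
            funext u
            simp [Complex.norm_exp, Complex.mul_re, Complex.mul_im]
        simp_rw [hnrm]
        rw [integral_const_mul, MeasureTheory.integral_fintype_prod_volume_eq_prod (ι := Fin d)
          (f := fun j (u : ℝ) => Set.indicator (Set.Ioi t)
            (fun u : ℝ => Real.exp ((z j).im * u)) u)]
        congr 1
        refine Finset.prod_congr rfl fun j _ => ?_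
        rw [integral_indicator measurableSet_Ioi]
        have hb : 0 < -(z j).im := by linarith [hz j]
        have := rexp_integral_Ioi (-(z j).im) hb t
        simpa [neg_mul, neg_neg] using this
      refine Integrable.congr ?_ (Eventually.of_forall fun t => (heq t).symm)
      have h2 : (fun t : ℝ => (if Real.log K < t then Real.exp t else 0) *
          ∏ j, (Real.exp ((z j).im * t) / (-(z j).im))) =
          fun t : ℝ => (∏ j, (-(z j).im)⁻¹) *
            Set.indicator (Set.Ioi (Real.log K))
              (fun t : ℝ => Real.exp ((1 + (∑ j, z j).im) * t)) t := by
        funext t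
        rw [Finset.prod_div_distrib, ← Real.exp_sum]
        by_cases ht : Real.log K < t
        · rw [if_pos ht, Set.indicator_of_mem (Set.mem_Ioi.mpr ht)]
          have h3 : ∑ j, (z j).im * t = (∑ j, z j).im * t := by
            rw [hSim, Finset.sum_mul]
          rw [h3, add_mul, one_mul, Real.exp_add, div_eq_mul_inv, ← Finset.prod_inv_distrib]
          ring
        · rw [if_neg ht, Set.indicator_of_notMem (by simpa using ht)]
          simp
      rw [h2]
      apply Integrable.const_mul
      rw [integrable_indicator_iff measurableSet_Ioi]
      have hb : 0 < -(1 + (∑ j, z j).im) := by linarith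
      have := exp_neg_integrableOn_Ioi (Real.log K) hb
      simpa [neg_mul, neg_neg] using this
  have hA : ∀ t : ℝ, (∫ x : Fin d → ℝ, F x t) =
      Set.indicator (Set.Ioi (Real.log K))
        (fun t : ℝ => Complex.exp ((1 - Complex.I * ∑ j, z j) * (t : ℂ))) t
        / ∏ j, (Complex.I * z j) := by
    intro t
    by_cases ht : Real.log K < t
    · have h0 : (fun x : Fin d → ℝ => F x t) = fun x => Complex.exp (t : ℂ) *
          ∏ j, (fun u : ℝ => Set.indicator (Set.Ioi t)
            (fun u : ℝ => Complex.exp (-(Complex.I * z j * (u : ℂ)))) u) (x j) := by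
        funext x; rw [hF]; simp only [ht, if_true]
      rw [h0, integral_const_mul,
        MeasureTheory.integral_fintype_prod_volume_eq_prod (ι := Fin d)
          (f := fun j (u : ℝ) => Set.indicator (Set.Ioi t)
            (fun u : ℝ => Complex.exp (-(Complex.I * z j * (u : ℂ)))) u)]
      have h1 : ∀ j, (∫ u : ℝ, Set.indicator (Set.Ioi t)
          (fun u : ℝ => Complex.exp (-(Complex.I * z j * (u : ℂ)))) u)
          = Complex.exp (-(Complex.I * z j * (t : ℂ))) / (Complex.I * z j) := by
        intro j
        rw [integral_indicator measurableSet_Ioi]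
        exact cexp_integral_Ioi (Complex.I * z j) (hizre j) t
      rw [Finset.prod_congr rfl fun j _ => h1 j, Finset.prod_div_distrib, ← Complex.exp_sum]
      rw [Set.indicator_of_mem (Set.mem_Ioi.mpr ht)]
      rw [← mul_div_assoc]
      congr 1
      rw [← Complex.exp_add]
      congr 1
      rw [Finset.sum_congr rfl (fun j _ => by ring : ∀ j ∈ Finset.univ, -(Complex.I * z j * (t:ℂ)) = (-(Complex.I * (t:ℂ))) * z j), ← Finset.mul_sum]
      ring
    · have h0 : (fun x : Fin d → ℝ => F x t) = fun _ => 0 := by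
        funext x; rw [hF]; simp [ht]
      rw [h0, integral_zero, Set.indicator_of_notMem (by simpa using ht), zero_div]
  calc (∫ x : Fin d → ℝ,
        Complex.exp (-(Complex.I * ∑ j, z j * (x j : ℂ))) *
          (max ((⨅ j, Real.exp (x j)) - K) 0 : ℝ))
      = ∫ x : Fin d → ℝ, ∫ t : ℝ, F x t := by
        exact integral_congr_ae (.of_forall fun x => (hB x).symm)
    _ = ∫ t : ℝ, ∫ x : Fin d → ℝ, F x t := integral_integral_swap hFint
    _ = ∫ t : ℝ, Set.indicator (Set.Ioi (Real.log K))
          (fun t : ℝ => Complex.exp ((1 - Complex.I * ∑ j, z j) * (t : ℂ))) t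
          / ∏ j, (Complex.I * z j) := integral_congr_ae (.of_forall fun t => hA t)
    _ = (∫ t : ℝ in Set.Ioi (Real.log K),
          Complex.exp ((1 - Complex.I * ∑ j, z j) * (t : ℂ))) / ∏ j, (Complex.I * z j) := by
        rw [integral_div, integral_indicator measurableSet_Ioi]
    _ = (K : ℂ) ^ ((1 : ℂ) - Complex.I * ∑ j, z j) /
        ((Complex.I * (∑ j, z j) - 1) * ∏ j, (Complex.I * z j)) := by
        have hc : 0 < (Complex.I * (∑ j, z j) - 1).re := by
          simp only [Complex.sub_re, Complex.mul_re, Complex.I_re, Complex.I_im,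
            Complex.one_re, zero_mul, one_mul, zero_sub]
          linarith
        have h := cexp_integral_Ioi (Complex.I * (∑ j, z j) - 1) hc (Real.log K)
        have h2 : (fun t : ℝ => Complex.exp (-((Complex.I * (∑ j, z j) - 1) * (t : ℂ))))
            = fun t : ℝ => Complex.exp ((1 - Complex.I * ∑ j, z j) * (t : ℂ)) := by
          funext t; ring_nf
        rw [h2] at h
        rw [h]
        rw [Complex.cpow_def_of_ne_zero (by exact_mod_cast hK.ne' : (K : ℂ) ≠ 0)]
        rw [← Complex.ofReal_log hK.le]
        rw [div_div]
        congr 2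
        ring
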